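/- For any endomorphism h of a Boolean algebra B, the set Ex Ker(h) = {x₁ ∪ x₂ : h(x₁) = 0 and h(y) = y for every y ≤ x₂} is an ideal of B. -/
import Mathlib


variable {B : Type*} [BooleanAlgebra B]

/-- `Ex Ker(h) = {x₁ ⊔ x₂ : h x₁ = ⊥ and h y = y for all y ≤ x₂}`. -/
def exKer (h : B → B) : Set B :=
  {z | ∃ x₁ x₂ : B, z = x₁ ⊔ x₂ ∧ h x₁ = ⊥ ∧ ∀ y ≤ x₂, h y = y}

/-- For any endomorphism `h` of a Boolean algebra `B`, `Ex Ker(h)` is an ideal of `B`. -/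
theorem exKer_isIdeal (h : B → B)
    (hsup : ∀ x y, h (x ⊔ y) = h x ⊔ h y)
    (hinf : ∀ x y, h (x ⊓ y) = h x ⊓ h y)
    (hbot : h ⊥ = ⊥) (htop : h ⊤ = ⊤) :
    ⊥ ∈ exKer h ∧
      (∀ a b : B, b ∈ exKer h → a ≤ b → a ∈ exKer h) ∧
      (∀ a ∈ exKer h, ∀ b ∈ exKer h, a ⊔ b ∈ exKer h) := by
  refine ⟨⟨⊥, ⊥, by simp, hbot, fun y hy => by simpa [le_bot_iff.mp hy] using hbot⟩, ?_, ?_⟩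
  · rintro a b ⟨x₁, x₂, rfl, h1, h2⟩ hab
    refine ⟨a ⊓ x₁, a ⊓ x₂, ?_, ?_, ?_⟩
    · rw [← inf_sup_left, inf_eq_left.mpr hab]
    · rw [hinf, h1, inf_bot_eq]
    · exact fun y hy => h2 y (hy.trans inf_le_right)
  · rintro a ⟨x₁, x₂, rfl, h1, h2⟩ b ⟨y₁, y₂, rfl, g1, g2⟩
    refine ⟨x₁ ⊔ y₁, x₂ ⊔ y₂, by ac_rfl, by rw [hsup, h1, g1, bot_sup_eq], ?_⟩
    intro y hy
    have : y = (y ⊓ x₂) ⊔ (y ⊓ y₂) := by rw [← inf_sup_left, inf_eq_left.mpr hy]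
    rw [this, hsup, h2 _ inf_le_right, g2 _ inf_le_right]
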